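/- The set Δ_n of all correlations of pairs of words of length n over an alphabet with at least two letters, ordered by set inclusion (viewing binary vectors as subsets of positions), is closed under intersection: if t, t' ∈ Δ_n then t ∩ t' ∈ Δ_n. -/

import Mathlib

/-- Correlation of two words of length `m` (as functions `Fin m → α`):
bit `i` is `1` iff `u[i+k] = v[k]` for all `k` with `i + k < m`. -/
def corrF {α : Type*} [DecidableEq α] {m : ℕ} (u v : Fin m → α) : Fin m → Bool :=
  fun i => decide (∀ j k : Fin m, (j : ℕ) = (i : ℕ) + (k : ℕ) → u j = v k)

namespace Stmt12H

def Per {κ : Type*} (W : ℕ → κ) (n d : ℕ) : Prop := ∀ k, k + d < n → W (k + d) = W k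

variable {κ : Type*}

lemma per_mod {W : ℕ → κ} {n p : ℕ} (hp : 0 < p) (h : Per W n p) :
    ∀ j, j < n → W j = W (j % p) := by
  intro j
  induction j using Nat.strong_induction_on with
  | _ j IH =>
    intro hj
    by_cases hjp : j < p
    · rw [Nat.mod_eq_of_lt hjp]
    · push_neg at hjp
      have h1 : (j - p) + p = j := Nat.sub_add_cancel hjp
      have h2 := h (j - p) (by omega)
      rw [h1] at h2
      rw [h2, IH (j - p) (by omega) (by omega), Nat.mod_eq_sub_mod hjp]

lemma per_sub {W : ℕ → κ} {n a b : ℕ} (hab : a ≤ b) (hn : a + b ≤ n)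
    (ha : Per W n a) (hb : Per W n b) : Per W n (b - a) := by
  intro k hk
  by_cases hc : k + b < n
  · have e1 : (k + (b - a)) + a = k + b := by omega
    have h1 := ha (k + (b - a)) (by omega)
    rw [e1] at h1
    rw [← h1, hb k hc]
  · have h1 := ha (k - a) (by omega)
    have e1 : (k - a) + a = k := by omega
    rw [e1] at h1
    have h2 := hb (k - a) (by omega)
    have e2 : (k - a) + b = k + (b - a) := by omega
    rw [e2] at h2
    rw [h2, h1]

lemma fine_wilf_aux (W : ℕ → κ) :
    ∀ s a b n, a + b = s → a + b ≤ n → Per W n a → Per W n b → Per W n (Nat.gcd a b) := by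
  intro s
  induction s using Nat.strong_induction_on with
  | _ s IH =>
    intro a b n hs hn ha hb
    rcases Nat.eq_zero_or_pos a with h0 | hapos
    · subst h0; simpa using hb
    rcases Nat.eq_zero_or_pos b with h0 | hbpos
    · subst h0; simpa using ha
    rcases le_total a b with hab | hba
    · have hsub : Per W n (b - a) := per_sub hab hn ha hb
      have := IH (a + (b - a)) (by omega) a (b - a) n rfl (by omega) ha hsub
      rwa [Nat.gcd_sub_self_right hab] at this
    · have hsub : Per W n (a - b) := per_sub hba (by omega) hb ha
      have := IH (b + (a - b)) (by omega) b (a - b) n rfl (by omega) hb hsub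
      rwa [Nat.gcd_sub_self_right hba, Nat.gcd_comm] at this

lemma fine_wilf {W : ℕ → κ} {n a b : ℕ} (ha : Per W n a) (hb : Per W n b)
    (hn : a + b ≤ n) : Per W n (Nat.gcd a b) :=
  fine_wilf_aux W (a + b) a b n rfl hn ha hb

lemma per_dvd {W : ℕ → κ} {n p d : ℕ} (h : Per W n p) (hd : p ∣ d) : Per W n d := by
  obtain ⟨c, rfl⟩ := hd
  induction c with
  | zero => intro k hk; rfl
  | succ c IHc =>
    intro k hk
    have hlt : k + p * c + p < n := by rw [Nat.mul_succ] at hk; omega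
    have h1 := h (k + p * c) hlt
    have e : k + p * c + p = k + p * (c + 1) := by rw [Nat.mul_succ]; omega
    rw [e] at h1
    rw [h1]
    exact IHc k (by omega)

lemma inv_sub {f : ℕ → Bool} {a b : ℕ} (hab : a ≤ b)
    (ha : ∀ x, f (x + a) = f x) (hb : ∀ x, f (x + b) = f x) :
    ∀ x, f (x + (b - a)) = f x := by
  intro x
  have h1 := ha (x + (b - a))
  have e : x + (b - a) + a = x + b := by omega
  rw [e, hb x] at h1
  exact h1.symm

lemma inv_gcd_aux (f : ℕ → Bool) :
    ∀ s a b, a + b = s → (∀ x, f (x + a) = f x) → (∀ x, f (x + b) = f x) →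
      ∀ x, f (x + Nat.gcd a b) = f x := by
  intro s
  induction s using Nat.strong_induction_on with
  | _ s IH =>
    intro a b hs ha hb
    rcases Nat.eq_zero_or_pos a with h0 | hapos
    · subst h0; simpa using hb
    rcases Nat.eq_zero_or_pos b with h0 | hbpos
    · subst h0; simpa using ha
    rcases le_total a b with hab | hba
    · have hsub := inv_sub hab ha hb
      have := IH (a + (b - a)) (by omega) a (b - a) rfl ha hsub
      rwa [Nat.gcd_sub_self_right hab] at this
    · have hsub := inv_sub hba hb ha
      have := IH (b + (a - b)) (by omega) b (a - b) rfl hb hsub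
      rwa [Nat.gcd_sub_self_right hba, Nat.gcd_comm] at this

lemma inv_gcd {f : ℕ → Bool} {a b : ℕ} (ha : ∀ x, f (x + a) = f x)
    (hb : ∀ x, f (x + b) = f x) : ∀ x, f (x + Nat.gcd a b) = f x :=
  inv_gcd_aux f (a + b) a b rfl ha hb

lemma inv_dvd {f : ℕ → Bool} {a b : ℕ} (ha : ∀ x, f (x + a) = f x) (hd : a ∣ b) :
    ∀ x, f (x + b) = f x := by
  obtain ⟨c, rfl⟩ := hd
  induction c with
  | zero => intro x; rfl
  | succ c IHc =>
    intro x
    have e : x + a * (c + 1) = (x + a * c) + a := by rw [Nat.mul_succ]; omega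
    rw [e, ha (x + a * c), IHc x]

def ψf (B : ℕ → Bool) (p0 : ℕ) : ℕ → Bool := fun a => B (a % p0)

def Zf (B : ℕ → Bool) (p p0 : ℕ) : ℕ → Bool :=
  fun j => if j < p - 1 then ψf B p0 j else if j = p - 1 then !(ψf B p0 (p - 1)) else B (j - p)

section CaseC

variable {B : ℕ → Bool} {l p p0 : ℕ}

lemma caseC_no_small
    (hl : 1 ≤ l) (hlp : l < p)
    (hp0l : 1 ≤ p0) (hp0u : p0 ≤ l)
    (hp0 : Per B l p0)
    (hp0min : ∀ e, 1 ≤ e → e < p0 → ¬ Per B l e)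
    {q : ℕ} (hq1 : 1 ≤ q) (hqp : q < p)
    (hq : Per (Zf B p p0) (p + l) q)
    (hqmin : ∀ e, 1 ≤ e → e < q → ¬ Per (Zf B p p0) (p + l) e) :
    False := by
  set Z := Zf B p p0 with hZdef
  set ψ := ψf B p0 with hψdef
  have hψB : ∀ i, i < l → B i = ψ i := fun i hi => per_mod hp0l hp0 i hi
  have hψcongr : ∀ a b : ℕ, a % p0 = b % p0 → ψ a = ψ b := by
    intro a b h; simp only [hψdef, ψf, h]
  have hψp0 : ∀ x, ψ (x + p0) = ψ x := by
    intro x; exact hψcongr _ _ (Nat.add_mod_right x p0)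
  have hZlow : ∀ j, j < p - 1 → Z j = ψ j := by
    intro j hj; simp only [hZdef, Zf, if_pos hj]; rfl
  have hZflip : Z (p - 1) = !(ψ (p - 1)) := by
    simp [hZdef, Zf]; rfl
  have hZhigh : ∀ i, Z (p + i) = B i := by
    intro i
    have h1 : ¬ (p + i < p - 1) := by omega
    have h2 : ¬ (p + i = p - 1) := by omega
    simp only [hZdef, Zf, if_neg h1, if_neg h2, Nat.add_sub_cancel_left]
  -- the "final blow": a ψ-invariance with small shift contradicts minimality of p0
  have contra : ∀ γ, 1 ≤ γ → γ < p0 → (∀ x, ψ (x + γ) = ψ x) → False := by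
    intro γ h1 h2 hInv
    apply hp0min γ h1 h2
    intro i hi
    rw [hψB (i + γ) hi, hψB i (by omega)]
    exact hInv i
  have hZp : Per Z (p + l) p := by
    intro k hk
    have hkl : k < l := by omega
    have e : k + p = p + k := by omega
    rw [e, hZhigh k, hZlow k (by omega), ← hψB k hkl]
  rcases le_or_gt q l with hql | hlq
  · -- q ≤ l : use Fine–Wilf to force q ∣ p
    have hgcd : Per Z (p + l) (Nat.gcd q p) := fine_wilf hq hZp (by omega)
    have hg1 : 1 ≤ Nat.gcd q p := Nat.gcd_pos_of_pos_left p hq1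
    have hgle : Nat.gcd q p ≤ q := Nat.gcd_le_left p hq1
    have hqdvd : q ∣ p := by
      rcases lt_or_ge (Nat.gcd q p) q with hlt | hge
      · exact absurd hgcd (hqmin _ hg1 hlt)
      · have he : Nat.gcd q p = q := le_antisymm hgle hge
        exact he ▸ Nat.gcd_dvd_right q p
    have hZmod : ∀ j, j < p + l → Z j = Z (j % q) := per_mod hq1 hq
    have hpq0 : p % q = 0 := Nat.mod_eq_zero_of_dvd hqdvd
    have hBq : ∀ i, i < l → B i = B (i % q) := by
      intro i hi
      have h1 := hZmod (p + i) (by omega)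
      rw [hZhigh i] at h1
      have e : (p + i) % q = i % q := by
        conv_lhs => rw [Nat.add_mod, hpq0]
        simp [Nat.mod_mod_of_dvd]
      rw [e] at h1
      have hiqq : i % q < q := Nat.mod_lt i (by omega)
      rw [hZlow _ (by omega)] at h1
      rw [h1, ← hψB (i % q) (by omega)]
    have hPBq : Per B l q := by
      intro i hi
      rw [hBq (i + q) hi, hBq i (by omega), Nat.add_mod_right]
    have hp0q : p0 ≤ q := by
      by_contra hcon
      exact hp0min q hq1 (by omega) hPBq
    have hGj : ∀ j, j < p - 1 → ψ j = ψ (j % q) := by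
      intro j hj
      have h1 := hZmod j (by omega)
      have hjq : j % q < q := Nat.mod_lt j (by omega)
      rw [hZlow j hj, hZlow _ (by omega)] at h1
      exact h1
    have hE1 : ψ (p - 1) ≠ ψ ((p - 1) % q) := by
      have h1 := hZmod (p - 1) (by omega)
      have hjq : (p - 1) % q < q := Nat.mod_lt (p - 1) (by omega)
      rw [hZflip, hZlow _ (by omega)] at h1
      intro hcon
      rw [← hcon] at h1
      simp at h1
    by_cases hdvd : p0 ∣ q
    · exact hE1 (hψcongr _ _ (Nat.mod_mod_of_dvd (p - 1) hdvd).symm)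
    · have hp0ltq : p0 < q := lt_of_le_of_ne hp0q (fun he => hdvd (he ▸ dvd_rfl))
      have h2q : 2 * q ≤ p := by
        obtain ⟨c, hc⟩ := hqdvd
        have hc0 : c ≠ 0 := by rintro rfl; omega
        have hc1 : c ≠ 1 := by rintro rfl; omega
        have : q * 2 ≤ q * c := Nat.mul_le_mul_left q (by omega)
        omega
      have hEdge : ∀ a, a < p0 → ψ (a + q) = ψ a := by
        intro a ha
        have h1 := hGj (a + q) (by omega)
        have e : (a + q) % q = a := by
          rw [Nat.add_mod_right]; exact Nat.mod_eq_of_lt (by omega)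
        rw [e] at h1
        exact h1
      have hInvq : ∀ x, ψ (x + q) = ψ x := by
        intro x
        have hxlt : x % p0 < p0 := Nat.mod_lt x (by omega)
        have h1 : ψ (x + q) = ψ (x % p0 + q) := hψcongr _ _ (Nat.mod_add_mod x p0 q).symm
        rw [h1, hEdge (x % p0) hxlt, hψcongr (x % p0) x (Nat.mod_mod_of_dvd x dvd_rfl)]
      have hγfull := inv_gcd hInvq hψp0
      have hγd : Nat.gcd q p0 ∣ p0 := Nat.gcd_dvd_right q p0
      have hγ1 : 1 ≤ Nat.gcd q p0 := Nat.gcd_pos_of_pos_left p0 hq1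
      have hγlt : Nat.gcd q p0 < p0 := by
        rcases lt_or_eq_of_le (Nat.le_of_dvd (by omega) hγd) with h | h
        · exact h
        · exact absurd (h ▸ Nat.gcd_dvd_left q p0) hdvd
      exact contra _ hγ1 hγlt hγfull
  · set s := p - q with hsdef
    have hs1 : 1 ≤ s := by omega
    have hsl : s + l < p := by omega
    have hInvSl : ∀ i, i < l → ψ (i + s) = ψ i := by
      intro i hi
      have h1 := hq (i + s) (by omega)
      have e : i + s + q = p + i := by omega
      rw [e, hZhigh i, hZlow (i + s) (by omega)] at h1
      rw [← h1, ← hψB i hi]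
    have hInvS : ∀ x, ψ (x + s) = ψ x := by
      intro x
      have hxlt : x % p0 < p0 := Nat.mod_lt x (by omega)
      have h1 : ψ (x + s) = ψ (x % p0 + s) := hψcongr _ _ (Nat.mod_add_mod x p0 s).symm
      rw [h1, hInvSl (x % p0) (by omega), hψcongr (x % p0) x (Nat.mod_mod_of_dvd x dvd_rfl)]
    by_cases hp0s : p0 ∣ s
    · have hR3 : ψ (s - 1) ≠ ψ (p - 1) := by
        have h1 := hq (s - 1) (by omega)
        have e : s - 1 + q = p - 1 := by omega
        rw [e, hZflip, hZlow (s - 1) (by omega)] at h1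
        intro hcon
        rw [hcon] at h1
        simp at h1
      by_cases hp0q : p0 ∣ q
      · apply hR3
        have h1 := inv_dvd hψp0 hp0q (s - 1)
        have e : s - 1 + q = p - 1 := by omega
        rw [e] at h1
        exact h1.symm
      · have hEdge : ∀ a, a + 1 < s → ψ (a + q) = ψ a := by
          intro a ha
          have h1 := hq a (by omega)
          rw [hZlow a (by omega), hZlow (a + q) (by omega)] at h1
          exact h1
        have hsp0 : p0 ≤ s := Nat.le_of_dvd (by omega) hp0s
        have hEdgeMod : ∀ x, x % p0 ≠ p0 - 1 → ψ (x + q) = ψ x := by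
          intro x hx
          have hxlt : x % p0 < p0 := Nat.mod_lt x (by omega)
          have h1 : ψ (x + q) = ψ (x % p0 + q) := hψcongr _ _ (Nat.mod_add_mod x p0 q).symm
          rw [h1, hEdge (x % p0) (by omega), hψcongr (x % p0) x (Nat.mod_mod_of_dvd x dvd_rfl)]
        have hγq : Nat.gcd q p0 ∣ q := Nat.gcd_dvd_left q p0
        have hγd : Nat.gcd q p0 ∣ p0 := Nat.gcd_dvd_right q p0
        have hγ1 : 1 ≤ Nat.gcd q p0 := Nat.gcd_pos_of_pos_left p0 hq1
        have hγlt : Nat.gcd q p0 < p0 := by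
          rcases lt_or_eq_of_le (Nat.le_of_dvd (by omega) hγd) with h | h
          · exact h
          · exact absurd (h ▸ Nat.gcd_dvd_left q p0) hp0q
        set γ := Nat.gcd q p0 with hγdef
        set c := p0 / γ with hcdef
        have hcγ : c * γ = p0 := Nat.div_mul_cancel hγd
        have hc2 : 2 ≤ c := by
          by_contra hcon
          push_neg at hcon
          have h1 : c * γ ≤ 1 * γ := Nat.mul_le_mul_right γ (by omega)
          rw [one_mul] at h1
          omega
        have hq' : γ * (q / γ) = q := Nat.mul_div_cancel' hγq
        have hcop : Nat.Coprime c (q / γ) := by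
          have h1 := Nat.coprime_div_gcd_div_gcd (m := q) (n := p0) (by omega)
          exact h1.symm
        have hndvd : ∀ k, 1 ≤ k → k < c → ¬ (p0 ∣ k * q) := by
          intro k hk1 hkc hdd
          have e : k * (q / γ) * γ = k * q := by
            rw [mul_assoc, mul_comm (q / γ) γ, hq']
          have h2 : c * γ ∣ k * (q / γ) * γ := by rw [hcγ, e]; exact hdd
          have h3 : c ∣ k * (q / γ) :=
            (Nat.mul_dvd_mul_iff_right (show 0 < γ by omega)).1 h2
          have h4 : c ∣ k := hcop.dvd_of_dvd_mul_right h3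
          have := Nat.le_of_dvd (by omega) h4
          omega
        have hchain : ∀ k, 1 ≤ k → k ≤ c → ψ (p0 - 1 + k * q) = ψ (p0 - 1 + q) := by
          intro k
          induction k with
          | zero => intro h _; exact absurd h (by omega)
          | succ k IHk =>
            intro _ hkc
            rcases Nat.eq_zero_or_pos k with rfl | hk0
            · simp
            · have e : p0 - 1 + (k + 1) * q = (p0 - 1 + k * q) + q := by
                rw [Nat.succ_mul]; omega
              rw [e, hEdgeMod (p0 - 1 + k * q) ?hcond, IHk (by omega) (by omega)]
              case hcond =>
                intro hcontra
                apply hndvd k hk0 (by omega)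
                have ha : (k * q) % p0 < p0 := Nat.mod_lt _ (by omega)
                have e2 : (p0 - 1 + k * q) % p0 = (p0 - 1 + (k * q) % p0) % p0 := by
                  conv_lhs => rw [Nat.add_mod]
                  conv_rhs => rw [Nat.add_mod]
                  rw [Nat.mod_mod_of_dvd _ dvd_rfl]
                rcases Nat.eq_zero_or_pos ((k * q) % p0) with h0 | hpos
                · exact Nat.dvd_of_mod_eq_zero h0
                · exfalso
                  have e3 : (p0 - 1 + (k * q) % p0) % p0 = (k * q) % p0 - 1 := by
                    rw [Nat.mod_eq_sub_mod (by omega)]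
                    have e4 : p0 - 1 + (k * q) % p0 - p0 = (k * q) % p0 - 1 := by omega
                    rw [e4]
                    exact Nat.mod_eq_of_lt (by omega)
                  omega
        have hlastdvd : p0 ∣ c * q := by
          refine ⟨q / γ, ?_⟩
          calc c * q = c * (γ * (q / γ)) := by rw [hq']
          _ = c * γ * (q / γ) := by ring
          _ = p0 * (q / γ) := by rw [hcγ]
        have hlast : ψ (p0 - 1 + q) = ψ (p0 - 1) := by
          have h1 := hchain c (by omega) le_rfl
          have h2 : ψ (p0 - 1 + c * q) = ψ (p0 - 1) := by
            obtain ⟨e, he⟩ := hlastdvd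
            apply hψcongr
            rw [he]
            exact Nat.add_mul_mod_self_left (p0 - 1) p0 e
          exact h1.symm.trans h2
        have hInvq : ∀ x, ψ (x + q) = ψ x := by
          intro x
          by_cases hx : x % p0 = p0 - 1
          · have e : (x + q) % p0 = (p0 - 1 + q) % p0 := by
              conv_lhs => rw [Nat.add_mod]
              conv_rhs => rw [Nat.add_mod]
              rw [hx, Nat.mod_eq_of_lt (show p0 - 1 < p0 by omega)]
            have h1 : ψ (x + q) = ψ (p0 - 1 + q) := hψcongr _ _ e
            have h2 : ψ (p0 - 1) = ψ x := by
              apply hψcongr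
              rw [Nat.mod_eq_of_lt (show p0 - 1 < p0 by omega)]
              exact hx.symm
            rw [h1, hlast, h2]
          · exact hEdgeMod x hx
        have hγfull := inv_gcd hInvq hψp0
        exact contra _ hγ1 hγlt hγfull
    · have hδfull := inv_gcd hInvS hψp0
      have hδd : Nat.gcd s p0 ∣ p0 := Nat.gcd_dvd_right s p0
      have hδ1 : 1 ≤ Nat.gcd s p0 := Nat.gcd_pos_of_pos_left p0 hs1
      have hδlt : Nat.gcd s p0 < p0 := by
        rcases lt_or_eq_of_le (Nat.le_of_dvd (by omega) hδd) with h | h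
        · exact h
        · exact absurd (h ▸ Nat.gcd_dvd_left s p0) hp0s
      exact contra _ hδ1 hδlt hδfull

end CaseC

theorem exists_bool {κ : Type*} : ∀ (n : ℕ) (w : ℕ → κ),
    ∃ Z : ℕ → Bool, ∀ d, d < n → (Per Z n d ↔ Per w n d) := by
  intro n
  induction n using Nat.strong_induction_on with
  | _ n IH =>
    intro w
    classical
    by_cases hex : ∃ d, (1 ≤ d ∧ d < n) ∧ Per w n d
    · have hfind := Nat.find_spec hex
      set p := Nat.find hex with hpdef
      obtain ⟨⟨hp1, hpn⟩, hpw⟩ := hfind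
      have hpmin : ∀ e, 1 ≤ e → e < p → ¬ Per w n e := by
        intro e he1 hep hper
        exact Nat.find_min hex hep ⟨⟨he1, by omega⟩, hper⟩
      have wres : ∀ j, j < n → w j = w (j % p) := per_mod hp1 hpw
      by_cases hC : 2 * p ≤ n
      · -- CASE B : small minimal period
        set m' := p + n % p with hm'def
        have hrho : n % p < p := Nat.mod_lt n (by omega)
        have hdm := Nat.div_add_mod n p
        have h2le : 2 ≤ n / p := (Nat.le_div_iff_mul_le (by omega)).2 (by omega)
        have hp2 : p * 2 = p + p := by ring
        have h3 : p * 2 ≤ p * (n / p) := Nat.mul_le_mul_left p h2le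
        have hm'n : m' < n := by omega
        have hpm' : p ≤ m' := by omega
        have hdvdnm' : p ∣ (n - m') := by
          obtain ⟨t, ht⟩ : ∃ t, n / p = t + 1 := ⟨n / p - 1, by omega⟩
          refine ⟨t, ?_⟩
          rw [ht] at hdm
          have : p * (t + 1) = p * t + p := by ring
          omega
        obtain ⟨B, hB⟩ := IH m' (by omega) (fun i => w (n - m' + i))
        have hSp : Per (fun i => w (n - m' + i)) m' p := by
          intro i hi
          have h1 := hpw (n - m' + i) (by omega)
          have e : n - m' + i + p = n - m' + (i + p) := by omega
          rw [e] at h1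
          exact h1
        have hBp : Per B m' p := by
          rcases lt_or_eq_of_le hpm' with h | h
          · exact (hB p h).2 hSp
          · intro k hk; exact absurd hk (by omega)
        have hBmod : ∀ i, i < m' → B i = B (i % p) := per_mod (by omega) hBp
        have hZper_p : Per (fun j => B (j % p)) n p := by
          intro k _
          show B ((k + p) % p) = B (k % p)
          rw [Nat.add_mod_right]
        have hSw : ∀ x, x < m' → w (n - m' + x) = w (x % p) := by
          intro x hx
          rw [wres _ (by omega)]
          congr 1
          obtain ⟨c, hc⟩ := hdvdnm'
          rw [hc, Nat.mul_add_mod]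
        refine ⟨fun j => B (j % p), ?_⟩
        intro d hd
        by_cases hdvd : p ∣ d
        · apply iff_of_true
          · intro k _
            show B ((k + d) % p) = B (k % p)
            obtain ⟨c, rfl⟩ := hdvd
            rw [Nat.add_mul_mod_self_left]
          · exact per_dvd hpw hdvd
        · have hd1 : 1 ≤ d := by
            rcases Nat.eq_zero_or_pos d with rfl | h
            · exact absurd (dvd_zero p) hdvd
            · exact h
          by_cases hdsmall : d + p ≤ n
          · apply iff_of_false
            · intro hper
              have hγper := fine_wilf hper hZper_p (by omega)
              set γ := Nat.gcd d p with hγdef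
              have hγd : γ ∣ p := Nat.gcd_dvd_right d p
              have hγ1 : 1 ≤ γ := Nat.gcd_pos_of_pos_left p hd1
              have hγlt : γ < p := by
                rcases lt_or_eq_of_le (Nat.le_of_dvd (by omega) hγd) with h | h
                · exact h
                · exact absurd (h ▸ Nat.gcd_dvd_left d p) hdvd
              have hBcyc : ∀ a, a < p → B ((a + γ) % p) = B a := by
                intro a ha
                have h1 := hγper a (by omega)
                have h2 : B ((a + γ) % p) = B (a % p) := h1
                rw [Nat.mod_eq_of_lt ha] at h2
                exact h2
              have hBγ : ∀ a, a < p → B a = B (a % γ) := by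
                intro a
                induction a using Nat.strong_induction_on with
                | _ a IHa =>
                  intro ha
                  by_cases haγ : a < γ
                  · rw [Nat.mod_eq_of_lt haγ]
                  · have h1 := hBcyc (a - γ) (by omega)
                    have e : a - γ + γ = a := by omega
                    rw [e, Nat.mod_eq_of_lt ha] at h1
                    rw [h1, IHa (a - γ) (by omega) (by omega),
                      Nat.mod_eq_sub_mod (by omega : γ ≤ a)]
              have hBmodγ : ∀ i, i < m' → B i = B (i % γ) := by
                intro i hi
                rw [hBmod i hi, hBγ (i % p) (Nat.mod_lt i (by omega)),
                  Nat.mod_mod_of_dvd i hγd]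
              have hPBγ : Per B m' γ := by
                intro i hi
                rw [hBmodγ (i + γ) hi, hBmodγ i (by omega), Nat.add_mod_right]
              have hPBpγ : Per B m' (p - γ) := by
                intro i hi
                rw [hBmodγ (i + (p - γ)) hi, hBmodγ i (by omega)]
                obtain ⟨c, hc⟩ := Nat.dvd_sub hγd (dvd_refl γ)
                rw [hc, Nat.add_mul_mod_self_left]
              have hSγ : Per (fun i => w (n - m' + i)) m' γ := (hB γ (by omega)).1 hPBγ
              have hSpγ : Per (fun i => w (n - m' + i)) m' (p - γ) :=
                (hB (p - γ) (by omega)).1 hPBpγ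
              have hWcyc : ∀ a, a < p → w ((a + γ) % p) = w a := by
                intro a ha
                by_cases hcase : a + γ < m'
                · have h1 : w (n - m' + (a + γ)) = w (n - m' + a) := hSγ a (by omega)
                  rw [hSw (a + γ) hcase, hSw a (by omega)] at h1
                  rw [Nat.mod_eq_of_lt ha] at h1
                  exact h1
                · have hge : p ≤ a + γ := by omega
                  have h1 : w (n - m' + (a + γ - p + (p - γ))) = w (n - m' + (a + γ - p)) :=
                    hSpγ (a + γ - p) (by omega)
                  have e0 : a + γ - p + (p - γ) = a := by omega
                  rw [e0] at h1
                  rw [hSw a (by omega), hSw (a + γ - p) (by omega)] at h1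
                  rw [Nat.mod_eq_of_lt ha, Nat.mod_eq_of_lt (by omega : a + γ - p < p)] at h1
                  rw [Nat.mod_eq_sub_mod hge, Nat.mod_eq_of_lt (by omega : a + γ - p < p)]
                  exact h1.symm
              have hWγ : Per w n γ := by
                intro k hk
                have h1 := hWcyc (k % p) (Nat.mod_lt k (by omega))
                rw [wres (k + γ) (by omega), wres k (by omega)]
                rw [← Nat.mod_add_mod]
                exact h1
              exact hpmin γ hγ1 hγlt hWγ
            · intro hper
              have hγper := fine_wilf hper hpw (by omega)
              have hγd : Nat.gcd d p ∣ p := Nat.gcd_dvd_right d p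
              have hγ1 : 1 ≤ Nat.gcd d p := Nat.gcd_pos_of_pos_left p hd1
              have hγlt : Nat.gcd d p < p := by
                rcases lt_or_eq_of_le (Nat.le_of_dvd (by omega) hγd) with h | h
                · exact h
                · exact absurd (h ▸ Nat.gcd_dvd_left d p) hdvd
              exact hpmin _ hγ1 hγlt hγper
          · -- large d
            push_neg at hdsmall
            have hd'lt : d - (n - m') < m' := by omega
            have hd'ge : n - m' ≤ d := by omega
            have hmodeq : ∀ x : ℕ, (x + (d - (n - m'))) % p = (x + d) % p := by
              intro x
              obtain ⟨c, hc⟩ := hdvdnm'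
              have e2 : x + d = x + (d - (n - m')) + p * c := by omega
              rw [e2, Nat.add_mul_mod_self_left]
            have hZline : Per (fun j => B (j % p)) n d ↔ Per B m' (d - (n - m')) := by
              constructor
              · intro h i hi
                have h1 : B ((i + d) % p) = B (i % p) := h i (by omega)
                rw [hBmod (i + (d - (n - m'))) hi, hBmod i (by omega), hmodeq i]
                exact h1
              · intro h k hk
                show B ((k + d) % p) = B (k % p)
                have h1 := h k (by omega)
                rw [hBmod (k + (d - (n - m'))) (by omega), hBmod k (by omega),
                  hmodeq k] at h1
                exact h1
            have hWline : Per w n d ↔ Per (fun i => w (n - m' + i)) m' (d - (n - m')) := by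
              constructor
              · intro h i hi
                show w (n - m' + (i + (d - (n - m')))) = w (n - m' + i)
                rw [hSw (i + (d - (n - m'))) hi, hSw i (by omega)]
                have h1 := h i (by omega)
                rw [wres (i + d) (by omega), wres i (by omega)] at h1
                rw [hmodeq i]
                exact h1
              · intro h k hk
                have hkp : k % p ≤ k := Nat.mod_le k p
                have e1 : (k % p + (d - (n - m'))) < m' := by omega
                have h1 : w (n - m' + (k % p + (d - (n - m')))) = w (n - m' + (k % p)) :=
                  h (k % p) (by omega)
                rw [hSw _ e1, hSw (k % p) (by omega)] at h1
                rw [wres (k + d) (by omega), wres k (by omega)]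
                rw [hmodeq (k % p), Nat.mod_add_mod, Nat.mod_mod_of_dvd k (dvd_refl p)] at h1
                exact h1
            exact hZline.trans ((hB (d - (n - m')) hd'lt).trans hWline.symm)
      · -- CASE C : large minimal period
        push_neg at hC
        set l := n - p with hldef
        have hl1 : 1 ≤ l := by omega
        have hlp : l < p := by omega
        obtain ⟨B, hB⟩ := IH l (by omega) (fun k => w (p + k))
        have hp0ex : ∃ d, 1 ≤ d ∧ Per B l d :=
          ⟨l, hl1, fun k hk => absurd hk (by omega)⟩
        set p0 := Nat.find hp0ex with hp0def
        obtain ⟨hp01, hp0per⟩ := Nat.find_spec hp0ex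
        have hp0u : p0 ≤ l :=
          Nat.find_min' hp0ex ⟨hl1, fun k hk => absurd hk (by omega)⟩
        have hp0min : ∀ e, 1 ≤ e → e < p0 → ¬ Per B l e := by
          intro e he1 hep hper
          exact Nat.find_min hp0ex hep ⟨he1, hper⟩
        have hn' : n = p + l := by omega
        have hψB : ∀ i, i < l → B i = ψf B p0 i := fun i hi => per_mod hp01 hp0per i hi
        have hZlow : ∀ j, j < p - 1 → Zf B p p0 j = ψf B p0 j := by
          intro j hj; simp only [Zf, if_pos hj]
        have hZhigh : ∀ i, Zf B p p0 (p + i) = B i := by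
          intro i
          have h1 : ¬ (p + i < p - 1) := by omega
          have h2 : ¬ (p + i = p - 1) := by omega
          simp only [Zf, if_neg h1, if_neg h2, Nat.add_sub_cancel_left]
        have hZB : ∀ j, j < l → Zf B p p0 j = B j := by
          intro j hj; rw [hZlow j (by omega), ← hψB j hj]
        have hZp : Per (Zf B p p0) n p := by
          intro k hk
          have e : k + p = p + k := by omega
          rw [e, hZhigh k, hZB k (by omega)]
        refine ⟨Zf B p p0, ?_⟩
        intro d hd
        rcases Nat.eq_zero_or_pos d with rfl | hd1
        · exact iff_of_true (fun k _ => rfl) (fun k _ => rfl)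
        rcases lt_trichotomy d p with hdp | rfl | hpd
        · apply iff_of_false
          · intro hper
            have hex2 : ∃ e, (1 ≤ e ∧ e < p) ∧ Per (Zf B p p0) (p + l) e :=
              ⟨d, ⟨hd1, hdp⟩, by rw [← hn']; exact hper⟩
            obtain ⟨⟨hq1, hqp⟩, hqper⟩ := Nat.find_spec hex2
            have hqmin : ∀ e, 1 ≤ e → e < Nat.find hex2 →
                ¬ Per (Zf B p p0) (p + l) e := by
              intro e he1 heq hper2
              exact Nat.find_min hex2 heq ⟨⟨he1, by omega⟩, hper2⟩
            exact caseC_no_small hl1 hlp hp01 hp0u hp0per hp0min hq1 hqp hqper hqmin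
          · exact hpmin d hd1 hdp
        · exact iff_of_true hZp hpw
        · have hTl : ∀ k, k < l → w (p + k) = w k := by
            intro k hk
            have h1 := hpw k (by omega)
            have e : k + p = p + k := by omega
            rw [e] at h1
            exact h1
          have hZiff : Per (Zf B p p0) n d ↔ Per B l (d - p) := by
            constructor
            · intro h i hi
              have h1 := h i (by omega)
              have e : i + d = p + (i + (d - p)) := by omega
              rw [e, hZhigh, hZB i (by omega)] at h1
              exact h1
            · intro h k hk
              have e : k + d = p + (k + (d - p)) := by omega
              rw [e, hZhigh, hZB k (by omega)]
              exact h k (by omega)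
          have hWiff : Per w n d ↔ Per (fun k => w (p + k)) l (d - p) := by
            constructor
            · intro h i hi
              show w (p + (i + (d - p))) = w (p + i)
              have h1 := h i (by omega)
              have e : p + (i + (d - p)) = i + d := by omega
              rw [e, h1]
              exact (hTl i (by omega)).symm
            · intro h k hk
              have h1 : w (p + (k + (d - p))) = w (p + k) := h k (by omega)
              have e : p + (k + (d - p)) = k + d := by omega
              rw [e, hTl k (by omega)] at h1
              exact h1
          exact hZiff.trans ((hB (d - p) (by omega)).trans hWiff.symm)
    · -- CASE A : no nontrivial period
      push_neg at hex
      rcases Nat.eq_zero_or_pos n with rfl | hn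
      · exact ⟨fun _ => false, fun d hd => absurd hd (by omega)⟩
      · refine ⟨fun j => decide (j = n - 1), ?_⟩
        intro d hd
        rcases Nat.eq_zero_or_pos d with rfl | hd1
        · exact iff_of_true (fun k _ => rfl) (fun k _ => rfl)
        · apply iff_of_false
          · intro hper
            have h1 := hper (n - 1 - d) (by omega)
            have e : n - 1 - d + d = n - 1 := by omega
            rw [e] at h1
            simp only [decide_eq_decide] at h1
            have h2 : n - 1 - d = n - 1 := h1.mp trivial
            omega
          · intro hper
            exact hex d ⟨by omega, by omega⟩ hper

section Final

variable {α : Type*} [DecidableEq α]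

def Cross (U V : ℕ → α) (n i : ℕ) : Prop := ∀ k, i + k < n → U (i + k) = V k

lemma corr_char {n : ℕ} (u v : Fin n → α) (U V : ℕ → α)
    (hU : ∀ j : Fin n, U j = u j) (hV : ∀ j : Fin n, V j = v j) (i : Fin n) :
    corrF u v i = true ↔ Cross U V n i := by
  simp only [corrF, decide_eq_true_eq]
  constructor
  · intro h k hk
    have hk2 : k < n := by omega
    calc U ((i : ℕ) + k) = u ⟨(i : ℕ) + k, hk⟩ := by exact hU ⟨(i : ℕ) + k, hk⟩
    _ = v ⟨k, hk2⟩ := h ⟨(i : ℕ) + k, hk⟩ ⟨k, hk2⟩ rfl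
    _ = V k := by exact (hV ⟨k, hk2⟩).symm
  · intro h j k hjk
    have h1 := h (k : ℕ) (by omega)
    rw [← hjk] at h1
    rw [hU j, hV k] at h1
    exact h1

end Final

end Stmt12H

open Stmt12H in
/-- `Δ_n` is closed under (bitwise) intersection. -/
theorem stmt12 {α : Type*} [DecidableEq α] [Fintype α] (hcard : 2 ≤ Fintype.card α)
    (n : ℕ) (t t' : Fin n → Bool)
    (ht : ∃ u v : Fin n → α, corrF u v = t) (ht' : ∃ u v : Fin n → α, corrF u v = t') :
    ∃ u v : Fin n → α, corrF u v = fun i => t i && t' i := by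
  classical
  obtain ⟨a, b, hab⟩ := Fintype.exists_pair_of_one_lt_card
    (show 1 < Fintype.card α by omega)
  obtain ⟨u1, v1, hc1⟩ := ht
  obtain ⟨u2, v2, hc2⟩ := ht'
  set U1 : ℕ → α := fun j => if h : j < n then u1 ⟨j, h⟩ else a with hU1
  set V1 : ℕ → α := fun j => if h : j < n then v1 ⟨j, h⟩ else a with hV1
  set U2 : ℕ → α := fun j => if h : j < n then u2 ⟨j, h⟩ else a with hU2
  set V2 : ℕ → α := fun j => if h : j < n then v2 ⟨j, h⟩ else a with hV2
  have hU1e : ∀ j : Fin n, U1 j = u1 j := fun j => by simp [hU1]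
  have hV1e : ∀ j : Fin n, V1 j = v1 j := fun j => by simp [hV1]
  have hU2e : ∀ j : Fin n, U2 j = u2 j := fun j => by simp [hU2]
  have hV2e : ∀ j : Fin n, V2 j = v2 j := fun j => by simp [hV2]
  have hT1 : ∀ i : Fin n, t i = true ↔ Cross U1 V1 n i := by
    intro i; rw [← hc1]; exact corr_char u1 v1 U1 V1 hU1e hV1e i
  have hT2 : ∀ i : Fin n, t' i = true ↔ Cross U2 V2 n i := by
    intro i; rw [← hc2]; exact corr_char u2 v2 U2 V2 hU2e hV2e i
  set TT : ℕ → Prop := fun i => ∃ h : i < n, t ⟨i, h⟩ = true ∧ t' ⟨i, h⟩ = true with hTT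
  by_cases hS : ∃ i, TT i
  · set r := Nat.find hS with hrdef
    obtain ⟨hrn, htr, htr'⟩ := Nat.find_spec hS
    have hrmin : ∀ i, i < r → ¬ TT i := fun i hi => Nat.find_min hS hi
    set m := n - r with hmdef
    have hm1 : 1 ≤ m := by omega
    have hCr1 : Cross U1 V1 n r := (hT1 ⟨r, hrn⟩).1 htr
    have hCr2 : Cross U2 V2 n r := (hT2 ⟨r, hrn⟩).1 htr'
    have char1 : ∀ i, r ≤ i → i < n → (Cross U1 V1 n i ↔ Per V1 m (i - r)) := by
      intro i hri hin
      constructor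
      · intro h k hk
        have h1 := h k (by omega)
        have h2 := hCr1 (k + (i - r)) (by omega)
        have e : r + (k + (i - r)) = i + k := by omega
        rw [e] at h2
        rw [← h2, h1]
      · intro h k hk
        have h2 := hCr1 (k + (i - r)) (by omega)
        have e : r + (k + (i - r)) = i + k := by omega
        rw [e] at h2
        rw [h2]
        exact h k (by omega)
    have char2 : ∀ i, r ≤ i → i < n → (Cross U2 V2 n i ↔ Per V2 m (i - r)) := by
      intro i hri hin
      constructor
      · intro h k hk
        have h1 := h k (by omega)
        have h2 := hCr2 (k + (i - r)) (by omega)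
        have e : r + (k + (i - r)) = i + k := by omega
        rw [e] at h2
        rw [← h2, h1]
      · intro h k hk
        have h2 := hCr2 (k + (i - r)) (by omega)
        have e : r + (k + (i - r)) = i + k := by omega
        rw [e] at h2
        rw [h2]
        exact h k (by omega)
    obtain ⟨ZB, hZB⟩ := exists_bool m (fun k => (V1 k, V2 k))
    have hZB' : ∀ d, d < m → (Per ZB m d ↔ (Per V1 m d ∧ Per V2 m d)) := by
      intro d hd
      rw [hZB d hd]
      constructor
      · intro h
        constructor
        · intro k hk; exact congrArg Prod.fst (h k hk)
        · intro k hk; exact congrArg Prod.snd (h k hk)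
      · rintro ⟨h1, h2⟩ k hk
        show ((V1 (k + d), V2 (k + d)) : α × α) = (V1 k, V2 k)
        rw [h1 k hk, h2 k hk]
    have inj : ∀ x y : Bool, ((if x then a else b) = if y then a else b) ↔ x = y := by
      intro x y
      cases x <;> cases y <;> simp [hab, Ne.symm hab]
    set z : ℕ → α := fun k => if ZB k then a else b with hzdef
    have hz : ∀ d, Per z m d ↔ Per ZB m d := by
      intro d
      constructor
      · intro h k hk; exact (inj _ _).1 (h k hk)
      · intro h k hk
        show (if ZB (k + d) then a else b) = (if ZB k then a else b)
        rw [h k hk]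
    set y0 : α := if ZB (m - 1) then b else a with hy0
    have hy0ne : z (m - 1) ≠ y0 := by
      by_cases c : ZB (m - 1) <;> simp [hzdef, hy0, c, hab, Ne.symm hab]
    set U : ℕ → α := fun j => if j < r then a else z (j - r) with hUdef
    set V : ℕ → α := fun k => if k < m then z k else y0 with hVdef
    refine ⟨fun i => U i, fun i => V i, ?_⟩
    funext i
    have hiff : Cross U V n i ↔ ((t i && t' i) = true) := by
      by_cases hir : r ≤ (i : ℕ)
      · have hstep : Cross U V n i ↔ Per z m ((i : ℕ) - r) := by
          constructor
          · intro h k hk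
            have h1 := h k (by omega)
            have e1 : ¬ ((i : ℕ) + k < r) := by omega
            have e2 : k < m := by omega
            simp only [hUdef, hVdef, if_neg e1, if_pos e2] at h1
            have e3 : (i : ℕ) + k - r = k + ((i : ℕ) - r) := by omega
            rw [e3] at h1
            exact h1
          · intro h k hk
            have e1 : ¬ ((i : ℕ) + k < r) := by omega
            have e2 : k < m := by omega
            simp only [hUdef, hVdef, if_neg e1, if_pos e2]
            have e3 : (i : ℕ) + k - r = k + ((i : ℕ) - r) := by omega
            rw [e3]
            exact h k (by omega)
        rw [hstep, hz _, hZB' _ (by omega), Bool.and_eq_true, hT1 i, hT2 i,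
          char1 _ hir i.isLt, char2 _ hir i.isLt]
      · push_neg at hir
        apply iff_of_false
        · intro h
          have h1 := h (n - 1 - i) (by omega)
          have e : (i : ℕ) + (n - 1 - (i : ℕ)) = n - 1 := by omega
          rw [e] at h1
          have e1 : ¬ (n - 1 < r) := by omega
          have e2 : ¬ (n - 1 - (i : ℕ) < m) := by omega
          simp only [hUdef, hVdef, if_neg e1, if_neg e2] at h1
          have e3 : n - 1 - r = m - 1 := by omega
          rw [e3] at h1
          exact hy0ne h1
        · intro hcon
          rw [Bool.and_eq_true] at hcon
          exact hrmin _ (by omega) ⟨i.isLt, hcon.1, hcon.2⟩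
    rw [Bool.eq_iff_iff]
    rw [corr_char (fun i : Fin n => U i) (fun i : Fin n => V i) U V
      (fun _ => rfl) (fun _ => rfl) i]
    exact hiff
  · refine ⟨fun _ => a, fun _ => b, ?_⟩
    funext i
    have hf : (t i && t' i) = false := by
      rcases Bool.eq_false_or_eq_true (t i && t' i) with h | h
      · rw [Bool.and_eq_true] at h
        exact absurd (⟨(i : ℕ), i.isLt, h.1, h.2⟩ : ∃ j, TT j) hS
      · exact h
    rw [hf]
    simp only [corrF, decide_eq_false_iff_not]
    intro hcon
    exact hab (hcon i ⟨0, by have := i.isLt; omega⟩ (by simp))
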